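/- arXiv:1204.4252 — 3 statements merged into one kernel-verified Lean document; each statement's English description precedes it below -/
import Mathlib

section
/- For any two vertices u and v of Q_n lying in different parts of the bipartition (i.e., at odd distance), there exists a Hamiltonian u–v path in Q_n. -/
def cube (n : ℕ) : SimpleGraph (Fin n → Bool) where
  Adj u v := (Finset.univ.filter fun i => u i ≠ v i).card = 1
  symm := by constructor; intro u v h; simpa [ne_comm] using h
  loopless := by constructor; intro u h; simp at h

instance (n : ℕ) : DecidableRel (cube n).Adj := fun u v =>
  inferInstanceAs (Decidable (_ = 1))

def onesCount {n : ℕ} (u : Fin n → Bool) : ℕ :=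
  (Finset.univ.filter fun i => u i = true).card

/-- Parity of onesCount vs parity of the Hamming distance. -/
lemma parity_key {m : ℕ} (x y : Fin m → Bool) :
    (Even (onesCount x) ↔ Even (onesCount y)) ↔
      Even ((Finset.univ.filter fun i => x i ≠ y i).card) := by
  have key : ((onesCount x : ZMod 2) + onesCount y) =
      (((Finset.univ.filter fun i => x i ≠ y i).card : ZMod 2)) := by
    rw [onesCount, onesCount, Finset.card_filter, Finset.card_filter, Finset.card_filter]
    push_cast
    rw [← Finset.sum_add_distrib]
    apply Finset.sum_congr rfl
    intro i _
    cases hx : x i <;> cases hy : y i <;> simp [hx, hy] <;> decide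
  rw [← ZMod.natCast_eq_zero_iff_even, ← ZMod.natCast_eq_zero_iff_even, ← ZMod.natCast_eq_zero_iff_even]
  have : ∀ a b c : ZMod 2, a + b = c → ((a = 0 ↔ b = 0) ↔ c = 0) := by decide
  exact this _ _ _ key

lemma cube_adj_iff {m : ℕ} (x y : Fin m → Bool) :
    (cube m).Adj x y ↔ (Finset.univ.filter fun i => x i ≠ y i).card = 1 := Iff.rfl

lemma onesCount_comp {m : ℕ} (x : Fin m → Bool) (σ : Equiv.Perm (Fin m)) :
    onesCount (x ∘ σ) = onesCount x := by
  unfold onesCount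
  apply Finset.card_bij' (fun i _ => σ i) (fun i _ => σ.symm i) <;> simp

lemma cube_adj_comp {m : ℕ} (x y : Fin m → Bool) (σ : Equiv.Perm (Fin m)) :
    (cube m).Adj (x ∘ σ) (y ∘ σ) ↔ (cube m).Adj x y := by
  rw [cube_adj_iff, cube_adj_iff]
  have : (Finset.univ.filter fun i => (x ∘ σ) i ≠ (y ∘ σ) i).card
      = (Finset.univ.filter fun i => x i ≠ y i).card := by
    apply Finset.card_bij' (fun i _ => σ i) (fun i _ => σ.symm i) <;> simp
  rw [this]

def compHom {m : ℕ} (σ : Equiv.Perm (Fin m)) : cube m →g cube m where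
  toFun := fun x => x ∘ σ
  map_rel' := fun h => (cube_adj_comp _ _ σ).mpr h

lemma compHom_injective {m : ℕ} (σ : Equiv.Perm (Fin m)) :
    Function.Injective (compHom σ) := by
  intro x y hxy
  have h2 : x ∘ ⇑σ = y ∘ ⇑σ := hxy
  funext i
  simpa using congrFun h2 (σ.symm i)

lemma adj_cons {m : ℕ} (c : Bool) (a b : Fin m → Bool) (h : (cube m).Adj a b) :
    (cube (m+1)).Adj (Fin.cons c a) (Fin.cons c b) := by
  rw [cube_adj_iff] at h ⊢
  rw [Finset.card_filter] at h ⊢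
  rw [Fin.sum_univ_succ]
  simpa using h

lemma adj_cross {m : ℕ} (c d : Bool) (hcd : c ≠ d) (w : Fin m → Bool) :
    (cube (m+1)).Adj (Fin.cons c w) (Fin.cons d w) := by
  rw [cube_adj_iff, Finset.card_filter, Fin.sum_univ_succ]
  simp [hcd]

def consHom {m : ℕ} (c : Bool) : cube m →g cube (m+1) :=
  ⟨fun a => Fin.cons c a, fun {a b} h => adj_cons c a b h⟩

lemma onesCount_cons {m : ℕ} (c : Bool) (a : Fin m → Bool) :
    onesCount (Fin.cons c a) = (if c then 1 else 0) + onesCount a := by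
  rw [onesCount, onesCount, Finset.card_filter, Finset.card_filter, Fin.sum_univ_succ]
  simp

lemma parity_flip {m : ℕ} (a : Fin (m+1) → Bool) :
    ¬ (Even (onesCount a) ↔ Even (onesCount (Function.update a 0 (!(a 0))))) := by
  rw [parity_key]
  have h : (Finset.univ.filter fun i => a i ≠ Function.update a 0 (!(a 0)) i) = {0} := by
    ext i
    rcases eq_or_ne i 0 with rfl | hi
    · simp
    · simp [Function.update_of_ne hi, hi]
  rw [h]
  simp

lemma consHom_apply {m : ℕ} (c : Bool) (a : Fin m → Bool) :
    consHom c a = Fin.cons c a := rfl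

lemma cons_injective {m : ℕ} (c : Bool) :
    Function.Injective (consHom (m := m) c) := by
  intro a b hab
  funext i
  have := congrFun hab i.succ
  simpa [consHom] using this

lemma cube_step {m : ℕ}
    (IH : ∀ u v : Fin (m+1) → Bool, ¬ (Even (onesCount u) ↔ Even (onesCount v)) →
      ∃ p : (cube (m+1)).Walk u v, p.IsPath ∧ ∀ w, w ∈ p.support)
    (c d : Bool) (hcd : c ≠ d) (a b : Fin (m+1) → Bool)
    (hab : Even (onesCount a) ↔ Even (onesCount b)) :
    ∃ p : (cube (m+2)).Walk (Fin.cons c a) (Fin.cons d b),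
      p.IsPath ∧ ∀ w, w ∈ p.support := by
  set w : Fin (m+1) → Bool := Function.update a 0 (!(a 0)) with hwdef
  have haw : ¬ (Even (onesCount a) ↔ Even (onesCount w)) := parity_flip a
  have hwb : ¬ (Even (onesCount w) ↔ Even (onesCount b)) := by tauto
  obtain ⟨p1, hp1, hs1⟩ := IH a w haw
  obtain ⟨p2, hp2, hs2⟩ := IH w b hwb
  let q1 : (cube (m+2)).Walk (Fin.cons c a) (Fin.cons c w) := p1.map (consHom c)
  let q2 : (cube (m+2)).Walk (Fin.cons d w) (Fin.cons d b) := p2.map (consHom d)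
  have cross : (cube (m+2)).Adj (Fin.cons c w) (Fin.cons d w) := adj_cross c d hcd w
  refine ⟨q1.append (SimpleGraph.Walk.cons cross q2), ?_, ?_⟩
  · rw [SimpleGraph.Walk.isPath_def, SimpleGraph.Walk.support_append,
      SimpleGraph.Walk.support_cons, List.tail_cons]
    have hq1 : q1.support.Nodup :=
      (SimpleGraph.Walk.map_isPath_of_injective (cons_injective c) hp1).support_nodup
    have hq2 : q2.support.Nodup :=
      (SimpleGraph.Walk.map_isPath_of_injective (cons_injective d) hp2).support_nodup
    refine hq1.append hq2 ?_
    intro x hx1 hx2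
    replace hx1 : x ∈ (p1.map (consHom c)).support := hx1
    replace hx2 : x ∈ (p2.map (consHom d)).support := hx2
    rw [SimpleGraph.Walk.support_map, List.mem_map] at hx1 hx2
    obtain ⟨t1, _, ht1⟩ := hx1
    obtain ⟨t2, _, ht2⟩ := hx2
    have h1 : x 0 = c := by rw [← ht1, consHom_apply]; simp
    have h2 : x 0 = d := by rw [← ht2, consHom_apply]; simp
    exact hcd (h1 ▸ h2)
  · intro x
    have hx : Fin.cons (x 0) (Fin.tail x) = x := Fin.cons_self_tail x
    have hcase : x 0 = c ∨ x 0 = d := by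
      have : ∀ e c d : Bool, c ≠ d → e = c ∨ e = d := by decide
      exact this (x 0) c d hcd
    rw [SimpleGraph.Walk.mem_support_append_iff]
    rcases hcase with h | h
    · left
      show x ∈ (p1.map (consHom c)).support
      rw [SimpleGraph.Walk.support_map, List.mem_map]
      exact ⟨Fin.tail x, hs1 _, by rw [consHom_apply, ← h]; exact hx⟩
    · right
      rw [SimpleGraph.Walk.support_cons]
      refine List.mem_cons_of_mem _ ?_
      show x ∈ (p2.map (consHom d)).support
      rw [SimpleGraph.Walk.support_map, List.mem_map]
      exact ⟨Fin.tail x, hs2 _, by rw [consHom_apply, ← h]; exact hx⟩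

lemma compHom_apply {m : ℕ} (σ : Equiv.Perm (Fin m)) (x : Fin m → Bool) :
    compHom σ x = x ∘ σ := rfl

set_option maxHeartbeats 1000000 in
lemma cube_ham : ∀ m : ℕ, ∀ u v : Fin (m+1) → Bool,
    ¬ (Even (onesCount u) ↔ Even (onesCount v)) →
    ∃ p : (cube (m+1)).Walk u v, p.IsPath ∧ ∀ w, w ∈ p.support := by
  intro m
  induction m with
  | zero =>
    intro u v h
    have hne : u 0 ≠ v 0 := by
      intro he
      apply h
      have huv : u = v := by
        funext i
        rw [Fin.fin_one_eq_zero i]; exact he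
      rw [huv]
    have hadj : (cube 1).Adj u v := by
      rw [cube_adj_iff, Finset.card_filter, Fin.sum_univ_succ]
      simp [hne]
    have huv : u ≠ v := fun he => hne (by rw [he])
    refine ⟨SimpleGraph.Walk.cons hadj SimpleGraph.Walk.nil, ?_, ?_⟩
    · simp [SimpleGraph.Walk.isPath_def, huv]
    · intro x
      have hx : x = u ∨ x = v := by
        have hb : x 0 = u 0 ∨ x 0 = v 0 := by
          have : ∀ e c d : Bool, c ≠ d → e = c ∨ e = d := by decide
          exact this _ _ _ hne
        rcases hb with h0 | h0
        · left; funext i; rw [Fin.fin_one_eq_zero i]; exact h0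
        · right; funext i; rw [Fin.fin_one_eq_zero i]; exact h0
      rcases hx with rfl | rfl <;> simp
  | succ k ih =>
    intro u v h
    have hne : u ≠ v := fun he => h (by rw [he])
    obtain ⟨i, hi⟩ := Function.ne_iff.mp hne
    set σ := Equiv.swap (0 : Fin (k+2)) i with hσ
    set u' := u ∘ σ with hu'def
    set v' := v ∘ σ with hv'def
    have h0 : u' 0 ≠ v' 0 := by
      simpa [hu'def, hv'def, hσ, Equiv.swap_apply_left] using hi
    have h' : ¬ (Even (onesCount u') ↔ Even (onesCount v')) := by
      rw [hu'def, hv'def, onesCount_comp, onesCount_comp]; exact h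
    have hu1 : Fin.cons (u' 0) (Fin.tail u') = u' := Fin.cons_self_tail u'
    have hv1 : Fin.cons (v' 0) (Fin.tail v') = v' := Fin.cons_self_tail v'
    have hab : Even (onesCount (Fin.tail u')) ↔ Even (onesCount (Fin.tail v')) := by
      rw [← hu1, ← hv1, onesCount_cons, onesCount_cons] at h'
      cases htc : u' 0 <;> cases htd : v' 0 <;> rw [htc, htd] at h' h0
      · exact absurd rfl h0
      · rw [if_neg (by decide), if_pos (by decide), zero_add, Nat.even_add] at h'
        have h1 : ¬ Even 1 := by decide
        tauto
      · rw [if_pos (by decide), if_neg (by decide), zero_add, Nat.even_add] at h'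
        have h1 : ¬ Even 1 := by decide
        tauto
      · exact absurd rfl h0
    obtain ⟨q, hq, hsq⟩ :=
      cube_step ih (u' 0) (v' 0) h0 (Fin.tail u') (Fin.tail v') hab
    let q0 : (cube (k+2)).Walk u' v' := q.copy hu1 hv1
    have e1 : compHom σ.symm u' = u := by
      funext j; rw [compHom_apply]; simp [hu'def]
    have e2 : compHom σ.symm v' = v := by
      funext j; rw [compHom_apply]; simp [hv'def]
    refine ⟨(q0.map (compHom σ.symm)).copy e1 e2, ?_, ?_⟩
    · rw [SimpleGraph.Walk.isPath_copy]
      apply SimpleGraph.Walk.map_isPath_of_injective (compHom_injective σ.symm)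
      rw [SimpleGraph.Walk.isPath_copy]
      exact hq
    · intro x
      rw [SimpleGraph.Walk.support_copy, SimpleGraph.Walk.support_map, List.mem_map]
      refine ⟨x ∘ σ, ?_, ?_⟩
      · rw [SimpleGraph.Walk.support_copy]; exact hsq _
      · rw [compHom_apply]; funext j; simp

/-- For any two vertices in different parts of the bipartition of Q_n (n ≥ 1),
there is a Hamiltonian path between them. -/
theorem cube_hamiltonian_path (n : ℕ) (hn : 1 ≤ n) (u v : Fin n → Bool)
    (h : ¬ (Even (onesCount u) ↔ Even (onesCount v))) :
    ∃ p : (cube n).Walk u v, p.IsPath ∧ ∀ w, w ∈ p.support := by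
  cases n with
  | zero => omega
  | succ m => exact cube_ham m u v h
end

section
/- Let n ≥ 5, 2 ≤ k ≤ n − 3, and split Q_n = L ⊙ R along one coordinate. Let F be a set of vertices with |F| ≤ 2n − 2k − 3, let S and T be k-sets of fault-free vertices with S ⊆ X and T ⊆ Y (the two bipartition classes), and set p = |S ∩ L|, q = |T ∩ L|. If p > q, then there exist p − q fault-free vertices u_1, …, u_{p−q} ∈ Y ∩ V(L) \ T whose neighbors v_1, …, v_{p−q} in R are fault-free and lie in X ∩ V(R) \ S. -/
lemma two_mul_le_two_pow (m : ℕ) (h : 3 ≤ m) : 2 * m ≤ 2 ^ m := by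
  induction m with
  | zero => omega
  | succ n ih =>
    rcases Nat.lt_or_ge n 3 with h3 | h3
    · interval_cases n <;> norm_num
    · have h1 := ih h3
      have h2 : 2 ≤ 2 ^ n := by
        calc 2 = 2 ^ 1 := by norm_num
        _ ≤ 2 ^ n := Nat.pow_le_pow_right (by norm_num) (by omega)
      rw [pow_succ]; omega

lemma update_self_of_eq {n : ℕ} {w : Fin n → Bool} {j : Fin n} {b : Bool} (h : w j = b) :
    Function.update w j b = w := by rw [← h, Function.update_eq_self]

lemma onesCount_update_true {n : ℕ} (w : Fin n → Bool) (j : Fin n) (h : w j = false) :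
    onesCount (Function.update w j true) = onesCount w + 1 := by
  unfold onesCount
  have he : (Finset.univ.filter fun i => Function.update w j true i = true)
      = insert j (Finset.univ.filter fun i => w i = true) := by
    ext i
    by_cases hij : i = j
    · subst hij; simp
    · simp [Function.update_of_ne hij, hij]
  rw [he, Finset.card_insert_of_notMem (by simp [h])]

lemma even_onesCount_update_true_iff {n : ℕ} (w : Fin n → Bool) (j : Fin n) (h : w j = false) :
    Even (onesCount (Function.update w j true)) ↔ ¬ Even (onesCount w) := by
  rw [onesCount_update_true w j h, Nat.even_add_one]

lemma even_flip {n : ℕ} (w : Fin n → Bool) (j : Fin n) :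
    Even (onesCount (Function.update w j (! w j))) ↔ ¬ Even (onesCount w) := by
  cases h : w j
  · simp only [h, Bool.not_false]
    exact even_onesCount_update_true_iff w j h
  · simp only [h, Bool.not_true]
    have h2 : (Function.update w j false) j = false := by simp
    have h3 := onesCount_update_true (Function.update w j false) j h2
    rw [Function.update_idem, update_self_of_eq h] at h3
    rw [h3, Nat.even_add_one, not_not]
lemma two_pow_sub_eq (n a : ℕ) (h : a < n) : 2 ^ (n - a) = 2 * 2 ^ (n - (a + 1)) := by
  rw [show n - a = (n - (a + 1)) + 1 by omega, pow_succ']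

lemma card_j_false {n : ℕ} (hn : 1 ≤ n) (j : Fin n) :
    (Finset.univ.filter fun w : Fin n → Bool => w j = false).card = 2 ^ (n - 1) := by
  classical
  have hsplit := Finset.card_filter_add_card_filter_not
    (s := (Finset.univ : Finset (Fin n → Bool))) (p := fun w => w j = false)
  have huniv : (Finset.univ : Finset (Fin n → Bool)).card = 2 ^ n := by
    simp [Finset.card_univ]
  have hbij : (Finset.univ.filter fun w : Fin n → Bool => w j = false).card
      = (Finset.univ.filter fun w : Fin n → Bool => ¬ (w j = false)).card := by
    refine Finset.card_nbij' (fun w => Function.update w j true)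
      (fun w => Function.update w j false) ?_ ?_ ?_ ?_
    · intro w hw; simp
    · intro w hw; simp
    · intro w hw
      simp only [Finset.mem_coe, Finset.mem_filter, Finset.mem_univ, true_and] at hw
      simp only [Function.update_idem]
      exact update_self_of_eq hw
    · intro w hw
      simp only [Finset.mem_coe, Finset.mem_filter, Finset.mem_univ, true_and] at hw
      simp only [Function.update_idem]
      exact update_self_of_eq (by revert hw; cases w j <;> simp)
  have h2 : 2 ^ n = 2 * 2 ^ (n - 1) := by
    simpa using two_pow_sub_eq n 0 hn
  rw [huniv, h2, ← hbij, ← two_mul] at hsplit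
  exact Nat.eq_of_mul_eq_mul_left (by norm_num) hsplit

lemma card_j_false_odd {n : ℕ} (hn : 2 ≤ n) (j : Fin n) :
    (Finset.univ.filter fun w : Fin n → Bool => w j = false ∧ ¬ Even (onesCount w)).card
      = 2 ^ (n - 2) := by
  classical
  obtain ⟨j', hj'⟩ : ∃ j' : Fin n, j' ≠ j := by
    have : Nontrivial (Fin n) := Fin.nontrivial_iff_two_le.mpr hn
    exact exists_ne j
  have hL := card_j_false (by omega) j
  have hsplit := Finset.card_filter_add_card_filter_not
    (s := (Finset.univ.filter fun w : Fin n → Bool => w j = false))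
    (p := fun w => ¬ Even (onesCount w))
  rw [Finset.filter_filter, Finset.filter_filter] at hsplit
  have hbij : (Finset.univ.filter fun w : Fin n → Bool => w j = false ∧ ¬ Even (onesCount w)).card
      = (Finset.univ.filter fun w : Fin n → Bool => w j = false ∧ ¬ ¬ Even (onesCount w)).card := by
    refine Finset.card_nbij' (fun w => Function.update w j' (! w j'))
      (fun w => Function.update w j' (! w j')) ?_ ?_ ?_ ?_
    · intro w hw
      simp only [Finset.mem_coe, Finset.mem_filter, Finset.mem_univ, true_and] at hw ⊢
      refine ⟨by rw [Function.update_of_ne (Ne.symm hj')]; exact hw.1, ?_⟩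
      rw [not_not, even_flip]
      exact hw.2
    · intro w hw
      simp only [Finset.mem_coe, Finset.mem_filter, Finset.mem_univ, true_and, not_not] at hw ⊢
      refine ⟨by rw [Function.update_of_ne (Ne.symm hj')]; exact hw.1, ?_⟩
      rw [even_flip, not_not]
      exact hw.2
    · intro w _
      simp only [Function.update_self, Bool.not_not, Function.update_idem, Function.update_eq_self]
    · intro w _
      simp only [Function.update_self, Bool.not_not, Function.update_idem, Function.update_eq_self]
  have h2 : 2 ^ (n - 1) = 2 * 2 ^ (n - 2) := two_pow_sub_eq n 1 hn
  rw [hL, h2, ← hbij, ← two_mul] at hsplit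
  exact Nat.eq_of_mul_eq_mul_left (by norm_num) hsplit
lemma linking_arith (n k p q c fc P : ℕ) (hn : 5 ≤ n) (hk2 : k ≤ n - 3)
    (hF : fc ≤ 2 * n - 2 * k - 3) (hpc : p + c = k) (hq : q ≤ k)
    (hpow : 2 * (n - 2) ≤ P) : p - q ≤ P - (q + fc + c) := by omega
/-- Existence of the linking vertices u_1, …, u_{p−q} in L with fault-free
neighbors in R (the counting argument of Case 2). -/
theorem cube_linking_vertices (n k : ℕ) (hn : 5 ≤ n) (hk1 : 2 ≤ k) (hk2 : k ≤ n - 3)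
    (j : Fin n) (F : Finset (Fin n → Bool)) (hF : F.card ≤ 2 * n - 2 * k - 3)
    (S T : Finset (Fin n → Bool)) (hS : S.card = k) (hT : T.card = k)
    (hSF : ∀ s ∈ S, s ∉ F) (hTF : ∀ t ∈ T, t ∉ F)
    (hSX : ∀ s ∈ S, Even (onesCount s)) (hTY : ∀ t ∈ T, ¬ Even (onesCount t))
    (p q : ℕ) (hp : p = (S.filter fun s => s j = false).card)
    (hq : q = (T.filter fun t => t j = false).card) (hpq : q < p) :
    ∃ u : Fin (p - q) → Fin n → Bool,
      Function.Injective u ∧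
      ∀ i, u i j = false ∧ ¬ Even (onesCount (u i)) ∧ u i ∉ T ∧ u i ∉ F ∧
        Function.update (u i) j true ∉ F ∧ Function.update (u i) j true ∉ S ∧
        Even (onesCount (Function.update (u i) j true)) := by
  classical
  set g : (Fin n → Bool) → (Fin n → Bool) := fun w => Function.update w j false with hg
  set Bad : Finset (Fin n → Bool) :=
    (T.filter fun t => t j = false) ∪ F.image g ∪ (S.filter fun s => ¬ (s j = false)).image g
    with hBadDef
  set A : Finset (Fin n → Bool) :=
    (Finset.univ.filter fun w : Fin n → Bool => w j = false ∧ ¬ Even (onesCount w)) \ Bad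
    with hADef
  have hAmem : ∀ w ∈ A, w j = false ∧ ¬ Even (onesCount w) ∧ w ∉ T ∧ w ∉ F ∧
      Function.update w j true ∉ F ∧ Function.update w j true ∉ S ∧
      Even (onesCount (Function.update w j true)) := by
    intro w hw
    rw [hADef, Finset.mem_sdiff, Finset.mem_filter] at hw
    obtain ⟨⟨-, hwj, hodd⟩, hbad⟩ := hw
    rw [hBadDef, Finset.mem_union, Finset.mem_union] at hbad
    push_neg at hbad
    obtain ⟨⟨hbT, hbF⟩, hbS⟩ := hbad
    have hwupd : g (Function.update w j true) = w := by
      rw [hg]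
      simp only [Function.update_idem]
      exact update_self_of_eq hwj
    refine ⟨hwj, hodd, ?_, ?_, ?_, ?_, ?_⟩
    · intro hwT
      exact hbT (Finset.mem_filter.mpr ⟨hwT, hwj⟩)
    · intro hwF
      exact hbF (Finset.mem_image.mpr ⟨w, hwF, by rw [hg]; exact update_self_of_eq hwj⟩)
    · intro hF'
      exact hbF (Finset.mem_image.mpr ⟨_, hF', hwupd⟩)
    · intro hS'
      refine hbS (Finset.mem_image.mpr ⟨_, Finset.mem_filter.mpr ⟨hS', ?_⟩, hwupd⟩)
      simp
    · rw [even_onesCount_update_true_iff w j hwj]; exact hodd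
  obtain ⟨c, hcdef⟩ : ∃ c, (S.filter fun s => ¬ (s j = false)).card = c := ⟨_, rfl⟩
  have hpc : p + c = k := by
    rw [hp, ← hcdef, ← hS]
    exact Finset.card_filter_add_card_filter_not _
  have hqk : q ≤ k := by
    rw [hq, ← hT]
    exact Finset.card_filter_le _ _
  have hBad : Bad.card ≤ q + F.card + c := by
    rw [hBadDef]
    calc ((T.filter fun t => t j = false) ∪ F.image g
          ∪ (S.filter fun s => ¬ (s j = false)).image g).card
        ≤ ((T.filter fun t => t j = false) ∪ F.image g).card
          + ((S.filter fun s => ¬ (s j = false)).image g).card := Finset.card_union_le _ _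
      _ ≤ (T.filter fun t => t j = false).card + (F.image g).card
          + ((S.filter fun s => ¬ (s j = false)).image g).card := by
          exact Nat.add_le_add_right (Finset.card_union_le _ _) _
      _ ≤ q + F.card + c := by
          refine Nat.add_le_add (Nat.add_le_add ?_ (Finset.card_image_le)) ?_
          · rw [hq]
          · rw [← hcdef]; exact Finset.card_image_le
  obtain ⟨P, hP⟩ : ∃ P, (2 : ℕ) ^ (n - 2) = P := ⟨_, rfl⟩
  have hpow : 2 * (n - 2) ≤ P := by
    rw [← hP]
    exact two_mul_le_two_pow _ (le_tsub_of_add_le_left (le_trans (by norm_num) hn))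
  have hLodd : (Finset.univ.filter fun w : Fin n → Bool =>
      w j = false ∧ ¬ Even (onesCount w)).card = P := by
    rw [card_j_false_odd (le_trans (by norm_num) hn) j, hP]
  have hAcard : p - q ≤ A.card := by
    calc p - q ≤ P - (q + F.card + c) :=
          linking_arith n k p q c F.card P hn hk2 hF hpc hqk hpow
      _ ≤ P - Bad.card := Nat.sub_le_sub_left hBad P
      _ = (Finset.univ.filter fun w : Fin n → Bool =>
            w j = false ∧ ¬ Even (onesCount w)).card - Bad.card := by rw [hLodd]
      _ ≤ A.card := Finset.le_card_sdiff _ _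
  obtain ⟨B, hBsub, hBcard⟩ := Finset.exists_subset_card_eq hAcard
  refine ⟨fun i => (B.equivFin.symm (Fin.cast hBcard.symm i) : Fin n → Bool), ?_, ?_⟩
  · intro a b hab
    have h1 : B.equivFin.symm (Fin.cast hBcard.symm a)
        = B.equivFin.symm (Fin.cast hBcard.symm b) := Subtype.coe_injective hab
    have h2 := B.equivFin.symm.injective h1
    exact Fin.ext (by simpa using congrArg Fin.val h2)
  · intro i
    exact hAmem _ (hBsub (B.equivFin.symm (Fin.cast hBcard.symm i)).2)
end

section
/- Let x, y be adjacent vertices of Q_3 and let u, v be vertices of Q_3 − {x, y} with d(u,v) = 1 and d({x,y},{u,v}) = 2. Then there is no u–v path containing all six vertices of Q_3 − {x, y}. -/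
/-! ### Auxiliary machinery -/

/-- Translation by XOR with a fixed vertex; a graph automorphism of the cube. -/
def trC (c w : Fin 3 → Bool) : Fin 3 → Bool := fun i => xor (w i) (c i)

lemma trC_invol (c w : Fin 3 → Bool) : trC c (trC c w) = w := by
  funext i
  show xor (xor (w i) (c i)) (c i) = w i
  cases w i <;> cases c i <;> rfl

lemma trC_ne {a b : Fin 3 → Bool} (c : Fin 3 → Bool) (h : a ≠ b) : trC c a ≠ trC c b := by
  intro h'
  apply h
  have := congrArg (trC c) h'
  rwa [trC_invol, trC_invol] at this

lemma trC_self (c : Fin 3 → Bool) : trC c c = fun _ => false := by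
  funext i
  show xor (c i) (c i) = false
  cases c i <;> rfl

lemma trC_adj (c a b : Fin 3 → Bool) :
    (cube 3).Adj (trC c a) (trC c b) ↔ (cube 3).Adj a b := by
  show (Finset.univ.filter fun i => trC c a i ≠ trC c b i).card = 1 ↔
       (Finset.univ.filter fun i => a i ≠ b i).card = 1
  have : (Finset.univ.filter fun i => trC c a i ≠ trC c b i) =
      Finset.univ.filter fun i => a i ≠ b i := by
    apply Finset.filter_congr
    intro i _
    show (xor (a i) (c i) ≠ xor (b i) (c i)) ↔ (a i ≠ b i)
    cases a i <;> cases b i <;> cases c i <;> simp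
  rw [this]

set_option synthInstance.maxSize 5000 in
set_option synthInstance.maxHeartbeats 2000000 in
set_option maxRecDepth 100000 in
set_option maxHeartbeats 4000000 in
lemma lemA : ∀ x y u v : Fin 3 → Bool, (cube 3).Adj x y → (cube 3).Adj u v →
    ¬ (cube 3).Adj x u → ¬ (cube 3).Adj x v → ¬ (cube 3).Adj y u → ¬ (cube 3).Adj y v →
    u ≠ x → u ≠ y → v ≠ x → v ≠ y →
    ((u = (fun i => !x i) ∧ v = (fun i => !y i)) ∨
     (u = (fun i => !y i) ∧ v = (fun i => !x i))) := by decide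

set_option maxRecDepth 100000 in
lemma lemY : ∀ y : Fin 3 → Bool, (cube 3).Adj (fun _ => false) y →
    (y = fun i => decide (i = 0)) ∨ (y = fun i => decide (i = 1)) ∨
    (y = fun i => decide (i = 2)) := by decide

set_option synthInstance.maxSize 5000 in
set_option synthInstance.maxHeartbeats 2000000 in
set_option maxRecDepth 100000 in
set_option maxHeartbeats 4000000 in
lemma lemC : ∀ y b1 b2 b3 b4 : Fin 3 → Bool,
    (y = fun i => decide (i = 0)) ∨ (y = fun i => decide (i = 1)) ∨
    (y = fun i => decide (i = 2)) →
    b1 ≠ b2 → b1 ≠ b3 → b1 ≠ b4 → b2 ≠ b3 → b2 ≠ b4 → b3 ≠ b4 →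
    b1 ≠ (fun _ => false) → b1 ≠ y → b1 ≠ (fun _ => true) → b1 ≠ (fun i => !y i) →
    b2 ≠ (fun _ => false) → b2 ≠ y → b2 ≠ (fun _ => true) → b2 ≠ (fun i => !y i) →
    b3 ≠ (fun _ => false) → b3 ≠ y → b3 ≠ (fun _ => true) → b3 ≠ (fun i => !y i) →
    b4 ≠ (fun _ => false) → b4 ≠ y → b4 ≠ (fun _ => true) → b4 ≠ (fun i => !y i) →
    ¬((cube 3).Adj (fun _ => true) b1 ∧ (cube 3).Adj b1 b2 ∧ (cube 3).Adj b2 b3 ∧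
      (cube 3).Adj b3 b4 ∧ (cube 3).Adj b4 (fun i => !y i)) := by decide

lemma univ_card8 : (Finset.univ : Finset (Fin 3 → Bool)).card = 8 := by decide

/-- The exceptional case of Dvořák's lemma in Q_3: if x, y are adjacent, u, v avoid
{x, y}, d(u,v) = 1 and d({x,y},{u,v}) = 2, then no u–v path covers all six
vertices of Q_3 − {x, y}. -/
theorem cube_dvorak_exception (x y u v : Fin 3 → Bool)
    (hxy : (cube 3).Adj x y)
    (hu : u ≠ x ∧ u ≠ y) (hv : v ≠ x ∧ v ≠ y)
    (huv : (cube 3).dist u v = 1)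
    (hd : min (min ((cube 3).dist x u) ((cube 3).dist x v))
          (min ((cube 3).dist y u) ((cube 3).dist y v)) = 2) :
    ¬ ∃ p : (cube 3).Walk u v, p.IsPath ∧ x ∉ p.support ∧ y ∉ p.support ∧
        ∀ w, w ≠ x → w ≠ y → w ∈ p.support := by
  rintro ⟨p, hp, hxs, hys, hall⟩
  -- basic facts from the distance hypotheses
  have hA : (cube 3).Adj u v := SimpleGraph.dist_eq_one_iff_adj.mp huv
  have h2xu : 2 ≤ (cube 3).dist x u := by
    rw [← hd]; exact le_trans (min_le_left _ _) (min_le_left _ _)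
  have h2xv : 2 ≤ (cube 3).dist x v := by
    rw [← hd]; exact le_trans (min_le_left _ _) (min_le_right _ _)
  have h2yu : 2 ≤ (cube 3).dist y u := by
    rw [← hd]; exact le_trans (min_le_right _ _) (min_le_left _ _)
  have h2yv : 2 ≤ (cube 3).dist y v := by
    rw [← hd]; exact le_trans (min_le_right _ _) (min_le_right _ _)
  have hnxu : ¬ (cube 3).Adj x u := fun h => by
    have := SimpleGraph.dist_eq_one_iff_adj.mpr h; omega
  have hnxv : ¬ (cube 3).Adj x v := fun h => by
    have := SimpleGraph.dist_eq_one_iff_adj.mpr h; omega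
  have hnyu : ¬ (cube 3).Adj y u := fun h => by
    have := SimpleGraph.dist_eq_one_iff_adj.mpr h; omega
  have hnyv : ¬ (cube 3).Adj y v := fun h => by
    have := SimpleGraph.dist_eq_one_iff_adj.mpr h; omega
  -- the support of p is all of Q_3 minus {x, y}, hence has length 6
  have hnodup := hp.support_nodup
  have hchain := p.isChain_adj_support
  have hfin : p.support.toFinset = Finset.univ \ {x, y} := by
    ext w
    simp only [List.mem_toFinset, Finset.mem_sdiff, Finset.mem_univ, true_and,
      Finset.mem_insert, Finset.mem_singleton]
    constructor
    · intro hw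
      push_neg
      exact ⟨fun e => hxs (e ▸ hw), fun e => hys (e ▸ hw)⟩
    · intro hw
      push_neg at hw
      exact hall w hw.1 hw.2
  have hlen6 : p.support.length = 6 := by
    have h1 : p.support.toFinset.card = p.support.length :=
      List.toFinset_card_of_nodup hnodup
    rw [hfin] at h1
    have hcard : (Finset.univ \ {x, y} : Finset (Fin 3 → Bool)).card = 6 := by
      rw [Finset.card_sdiff_of_subset (Finset.subset_univ _), univ_card8]
      rw [Finset.card_insert_of_notMem (by simpa using hxy.ne), Finset.card_singleton]
    omega
  -- destructure the support into six explicit vertices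
  obtain ⟨a0, l0, h0⟩ := List.exists_of_length_succ (n := 5) p.support hlen6
  obtain ⟨a1, l1, h1⟩ := List.exists_of_length_succ l0
    (by have := congrArg List.length h0; rw [hlen6] at this; simpa using this.symm)
  obtain ⟨a2, l2, h2⟩ := List.exists_of_length_succ l1
    (by have := congrArg List.length h0; rw [hlen6, h1] at this; simpa using this.symm)
  obtain ⟨a3, l3, h3⟩ := List.exists_of_length_succ l2
    (by have := congrArg List.length h0; rw [hlen6, h1, h2] at this; simpa using this.symm)
  obtain ⟨a4, l4, h4⟩ := List.exists_of_length_succ l3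
    (by have := congrArg List.length h0; rw [hlen6, h1, h2, h3] at this; simpa using this.symm)
  obtain ⟨a5, l5, h5⟩ := List.exists_of_length_succ l4
    (by have := congrArg List.length h0; rw [hlen6, h1, h2, h3, h4] at this
        simpa using this.symm)
  have hl5 : l5 = [] := by
    have := congrArg List.length h0
    rw [hlen6, h1, h2, h3, h4, h5] at this
    simpa [List.length_eq_zero_iff] using this.symm
  have hsup : p.support = [a0, a1, a2, a3, a4, a5] := by
    rw [h0, h1, h2, h3, h4, h5, hl5]
  -- endpoints
  have ha0 : a0 = u := by
    have := p.support_eq_cons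
    rw [hsup] at this
    simpa using congrArg List.head? this
  have ha5 : a5 = v := by
    have := p.getLast_support
    rw [List.getLast_congr _ (List.cons_ne_nil _ _) hsup] at this
    simpa using this
  rw [ha0, ha5] at hsup
  -- adjacency chain along the path
  rw [hsup] at hchain hnodup hxs hys
  simp only [List.isChain_cons_cons, List.isChain_singleton, and_true] at hchain
  obtain ⟨c01, c12, c23, c34, c45⟩ := hchain
  simp only [List.nodup_cons, List.mem_cons, List.not_mem_nil, or_false,
    List.mem_singleton, List.nodup_nil, and_true, not_or] at hnodup
  obtain ⟨⟨hu1, hu2, hu3, hu4, huv'⟩, ⟨h12, h13, h14, h1v⟩, ⟨h23, h24, h2v⟩,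
    ⟨h34, h3v⟩, h4v⟩ := hnodup
  simp only [List.mem_cons, List.not_mem_nil, or_false, List.mem_singleton, not_or] at hxs hys
  obtain ⟨hxu, hx1, hx2, hx3, hx4, hxv⟩ := hxs
  obtain ⟨hyu, hy1, hy2, hy3, hy4, hyv⟩ := hys
  -- classify u and v
  rcases lemA x y u v hxy hA hnxu hnxv hnyu hnyv hu.1 hu.2 hv.1 hv.2 with
    ⟨hue, hve⟩ | ⟨hue, hve⟩
  · -- u = ¬x, v = ¬y : translate by x
    set t := trC x with ht
    have htu : t u = fun _ => true := by
      funext i; rw [hue]; show xor (!x i) (x i) = true; cases x i <;> rfl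
    have htv : t v = fun i => !(t y i) := by
      funext i; rw [hve]; show xor (!y i) (x i) = !(xor (y i) (x i))
      cases y i <;> cases x i <;> rfl
    have hadjxy : (cube 3).Adj (fun _ => false) (t y) := by
      have := (trC_adj x x y).mpr hxy
      rwa [trC_self] at this
    refine lemC (t y) (t a1) (t a2) (t a3) (t a4) (lemY _ hadjxy)
      (trC_ne x h12) (trC_ne x h13) (trC_ne x h14) (trC_ne x h23) (trC_ne x h24)
      (trC_ne x h34)
      (by rw [← trC_self x]; exact trC_ne x (Ne.symm hx1))
      (trC_ne x (Ne.symm hy1))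
      (by rw [← htu]; exact trC_ne x (Ne.symm hu1))
      (by rw [← htv]; exact trC_ne x h1v)
      (by rw [← trC_self x]; exact trC_ne x (Ne.symm hx2))
      (trC_ne x (Ne.symm hy2))
      (by rw [← htu]; exact trC_ne x (Ne.symm hu2))
      (by rw [← htv]; exact trC_ne x h2v)
      (by rw [← trC_self x]; exact trC_ne x (Ne.symm hx3))
      (trC_ne x (Ne.symm hy3))
      (by rw [← htu]; exact trC_ne x (Ne.symm hu3))
      (by rw [← htv]; exact trC_ne x h3v)
      (by rw [← trC_self x]; exact trC_ne x (Ne.symm hx4))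
      (trC_ne x (Ne.symm hy4))
      (by rw [← htu]; exact trC_ne x (Ne.symm hu4))
      (by rw [← htv]; exact trC_ne x h4v.1)
      ⟨by rw [← htu]; exact (trC_adj x u a1).mpr c01,
       (trC_adj x a1 a2).mpr c12, (trC_adj x a2 a3).mpr c23,
       (trC_adj x a3 a4).mpr c34,
       by rw [← htv]; exact (trC_adj x a4 v).mpr c45⟩
  · -- u = ¬y, v = ¬x : translate by y
    set t := trC y with ht
    have htu : t u = fun _ => true := by
      funext i; rw [hue]; show xor (!y i) (y i) = true; cases y i <;> rfl
    have htv : t v = fun i => !(t x i) := by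
      funext i; rw [hve]; show xor (!x i) (y i) = !(xor (x i) (y i))
      cases x i <;> cases y i <;> rfl
    have hadjyx : (cube 3).Adj (fun _ => false) (t x) := by
      have := (trC_adj y y x).mpr hxy.symm
      rwa [trC_self] at this
    refine lemC (t x) (t a1) (t a2) (t a3) (t a4) (lemY _ hadjyx)
      (trC_ne y h12) (trC_ne y h13) (trC_ne y h14) (trC_ne y h23) (trC_ne y h24)
      (trC_ne y h34)
      (by rw [← trC_self y]; exact trC_ne y (Ne.symm hy1))
      (trC_ne y (Ne.symm hx1))
      (by rw [← htu]; exact trC_ne y (Ne.symm hu1))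
      (by rw [← htv]; exact trC_ne y h1v)
      (by rw [← trC_self y]; exact trC_ne y (Ne.symm hy2))
      (trC_ne y (Ne.symm hx2))
      (by rw [← htu]; exact trC_ne y (Ne.symm hu2))
      (by rw [← htv]; exact trC_ne y h2v)
      (by rw [← trC_self y]; exact trC_ne y (Ne.symm hy3))
      (trC_ne y (Ne.symm hx3))
      (by rw [← htu]; exact trC_ne y (Ne.symm hu3))
      (by rw [← htv]; exact trC_ne y h3v)
      (by rw [← trC_self y]; exact trC_ne y (Ne.symm hy4))
      (trC_ne y (Ne.symm hx4))
      (by rw [← htu]; exact trC_ne y (Ne.symm hu4))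
      (by rw [← htv]; exact trC_ne y h4v.1)
      ⟨by rw [← htu]; exact (trC_adj y u a1).mpr c01,
       (trC_adj y a1 a2).mpr c12, (trC_adj y a2 a3).mpr c23,
       (trC_adj y a3 a4).mpr c34,
       by rw [← htv]; exact (trC_adj y a4 v).mpr c45⟩
end
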